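/- arXiv:1803.10591 — 5 statements merged into one kernel-verified Lean document; each statement's English description precedes it below -/
import Mathlib

section
/- For all x ∈ ℝⁿ with (τ, x) ≠ (0, 0), the spectral norm of the Hessian satisfies ‖H_{p,τ}(x)‖₂ ≤ max{1, p−1} (τ² + |x|²)^{(p-2)/2}. -/
/-- Spectral norm bound for the Hessian
`H_{p,τ}(x) = (τ²+|x|²)^{(p-2)/2} I + (p−2)(τ²+|x|²)^{(p-4)/2} x xᵀ`:
`‖H_{p,τ}(x)‖₂ ≤ max{1, p−1}(τ²+|x|²)^{(p-2)/2}` for `(τ,x) ≠ (0,0)`,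
stated as a bound on `‖H_{p,τ}(x) y‖` for every vector `y`. -/
theorem stmt_3 (n : ℕ) (p τ : ℝ) (hp : 1 < p) (hτ : 0 ≤ τ)
    (x : EuclideanSpace ℝ (Fin n)) (hx : τ ≠ 0 ∨ x ≠ 0) :
    ∀ y : EuclideanSpace ℝ (Fin n),
      ‖((τ ^ 2 + ‖x‖ ^ 2) ^ ((p - 2) / 2)) • y
          + ((p - 2) * (τ ^ 2 + ‖x‖ ^ 2) ^ ((p - 4) / 2) * (inner ℝ x y : ℝ)) • x‖
        ≤ max 1 (p - 1) * (τ ^ 2 + ‖x‖ ^ 2) ^ ((p - 2) / 2) * ‖y‖ := by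
  intro y
  set s : ℝ := τ ^ 2 + ‖x‖ ^ 2 with hs_def
  have hs : 0 < s := by
    rcases hx with h | h
    · have : 0 < τ ^ 2 := by positivity
      have : 0 ≤ ‖x‖ ^ 2 := by positivity
      nlinarith
    · have : 0 < ‖x‖ := norm_pos_iff.mpr h
      nlinarith [sq_nonneg τ]
  set a : ℝ := s ^ ((p - 2) / 2) with ha_def
  set b : ℝ := s ^ ((p - 4) / 2) with hb_def
  have ha : 0 < a := Real.rpow_pos_of_pos hs _
  have hb : 0 < b := Real.rpow_pos_of_pos hs _
  have key : b * s = a := by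
    rw [ha_def, hb_def, ← Real.rpow_add_one hs.ne']
    ring_nf
  set t : ℝ := inner ℝ x y with ht_def
  set c : ℝ := (p - 2) * b with hc_def
  have hsq : ‖a • y + (c * t) • x‖ ^ 2
      = a ^ 2 * ‖y‖ ^ 2 + c * (2 * a + c * ‖x‖ ^ 2) * t ^ 2 := by
    have hcomm : (inner ℝ y x : ℝ) = t := by rw [ht_def, real_inner_comm]
    rw [norm_add_sq_real, real_inner_smul_left, real_inner_smul_right,
      norm_smul, norm_smul, hcomm]
    simp only [Real.norm_eq_abs, mul_pow, sq_abs]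
    ring
  have ht2 : t ^ 2 ≤ ‖x‖ ^ 2 * ‖y‖ ^ 2 := by
    have := abs_real_inner_le_norm x y
    nlinarith [abs_nonneg t, sq_abs t]
  have hxs : ‖x‖ ^ 2 ≤ s := by nlinarith [sq_nonneg τ]
  have hpos : 0 ≤ 2 * a + c * ‖x‖ ^ 2 := by
    have : 2 * a + c * ‖x‖ ^ 2 = b * (2 * s + (p - 2) * ‖x‖ ^ 2) := by
      rw [hc_def, ← key]; ring
    rw [this]
    have h2 : 0 ≤ 2 * s + (p - 2) * ‖x‖ ^ 2 := by
      nlinarith [sq_nonneg τ, sq_nonneg ‖x‖]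
    positivity
  clear_value s a b t c
  clear ha_def hb_def ht_def
  set M : ℝ := max 1 (p - 1) with hM_def
  have hM1 : 1 ≤ M := le_max_left _ _
  have hMp : p - 1 ≤ M := le_max_right _ _
  clear_value M
  have hMnn : 0 ≤ M * a * ‖y‖ := by positivity
  have hmain : ‖a • y + (c * t) • x‖ ^ 2 ≤ (M * a * ‖y‖) ^ 2 := by
    rw [hsq]
    rcases le_total p 2 with hp2 | hp2
    · have hc0 : c ≤ 0 := by
        have h0 : p - 2 ≤ 0 := by linarith
        rw [hc_def]
        exact mul_nonpos_of_nonpos_of_nonneg h0 hb.le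
      have hterm : c * (2 * a + c * ‖x‖ ^ 2) * t ^ 2 ≤ 0 := by
        have := mul_nonpos_of_nonpos_of_nonneg hc0 hpos
        nlinarith [sq_nonneg t]
      have haM : a ≤ M * a := le_mul_of_one_le_left ha.le hM1
      have ha2 : a ^ 2 ≤ (M * a) ^ 2 := pow_le_pow_left₀ ha.le haM 2
      have hr : (M * a * ‖y‖) ^ 2 = (M * a) ^ 2 * ‖y‖ ^ 2 := by ring
      have := mul_le_mul_of_nonneg_right ha2 (sq_nonneg ‖y‖)
      linarith
    · have hc0 : 0 ≤ c := by
        have h0 : 0 ≤ p - 2 := by linarith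
        rw [hc_def]
        exact mul_nonneg h0 hb.le
      have hax : a + c * ‖x‖ ^ 2 ≤ (p - 1) * a := by
        have : a + c * ‖x‖ ^ 2 = b * (s + (p - 2) * ‖x‖ ^ 2) := by
          rw [hc_def, ← key]; ring
        rw [this]
        have h2 : s + (p - 2) * ‖x‖ ^ 2 ≤ (p - 1) * s := by nlinarith
        calc b * (s + (p - 2) * ‖x‖ ^ 2) ≤ b * ((p - 1) * s) := by
              exact mul_le_mul_of_nonneg_left h2 hb.le
          _ = (p - 1) * a := by rw [← key]; ring
      have hterm : c * (2 * a + c * ‖x‖ ^ 2) * t ^ 2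
          ≤ c * (2 * a + c * ‖x‖ ^ 2) * (‖x‖ ^ 2 * ‖y‖ ^ 2) := by
        have hcc : 0 ≤ c * (2 * a + c * ‖x‖ ^ 2) := mul_nonneg hc0 hpos
        exact mul_le_mul_of_nonneg_left ht2 hcc
      have hMa : (p - 1) * a ≤ M * a := mul_le_mul_of_nonneg_right hMp ha.le
      have h0 : 0 ≤ a + c * ‖x‖ ^ 2 :=
        add_nonneg ha.le (mul_nonneg hc0 (sq_nonneg _))
      have hax2 : (a + c * ‖x‖ ^ 2) ^ 2 ≤ (M * a) ^ 2 :=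
        pow_le_pow_left₀ h0 (le_trans hax hMa) 2
      have hexp : a ^ 2 * ‖y‖ ^ 2 + c * (2 * a + c * ‖x‖ ^ 2) * (‖x‖ ^ 2 * ‖y‖ ^ 2)
          = (a + c * ‖x‖ ^ 2) ^ 2 * ‖y‖ ^ 2 := by ring
      have hr : (M * a * ‖y‖) ^ 2 = (M * a) ^ 2 * ‖y‖ ^ 2 := by ring
      have hmul := mul_le_mul_of_nonneg_right hax2 (sq_nonneg ‖y‖)
      linarith
  calc ‖a • y + (c * t) • x‖
      = Real.sqrt (‖a • y + (c * t) • x‖ ^ 2) := by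
        rw [Real.sqrt_sq (norm_nonneg _)]
    _ ≤ Real.sqrt ((M * a * ‖y‖) ^ 2) := Real.sqrt_le_sqrt hmain
    _ = M * a * ‖y‖ := Real.sqrt_sq hMnn
end

section
/- There exists a constant C = C(p) > 0 such that for all x, y ∈ ℝⁿ and all τ ≥ 0, (τ² + |x|² + |y|²)^{(p-2)/2} |x − y|² ≤ C (Dφ_{p,τ}(x) − Dφ_{p,τ}(y)) · (x − y). -/
open Real Set

/-- The scalar key lemma, endpoint `s = ab`. -/
lemma key1 {p : ℝ} (hp : 1 < p) {τ a b : ℝ} (hτ : 0 ≤ τ) (hb : 0 ≤ b) (hba : b ≤ a) :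
    min (p - 1) ((8 : ℝ) ^ (-((p - 2) / 2)) / 2) *
        ((τ ^ 2 + a ^ 2 + b ^ 2) ^ ((p - 2) / 2) * (a - b))
      ≤ (τ ^ 2 + a ^ 2) ^ ((p - 2) / 2) * a - (τ ^ 2 + b ^ 2) ^ ((p - 2) / 2) * b := by
  set q : ℝ := (p - 2) / 2 with hqdef
  have ha : 0 ≤ a := hb.trans hba
  have hM0 : (0:ℝ) ≤ (τ ^ 2 + a ^ 2 + b ^ 2) ^ q := rpow_nonneg (by positivity) q
  have hMab : 0 ≤ (τ ^ 2 + a ^ 2 + b ^ 2) ^ q * (a - b) := mul_nonneg hM0 (sub_nonneg.2 hba)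
  have hA0 : (0:ℝ) ≤ (τ ^ 2 + a ^ 2) ^ q := rpow_nonneg (by positivity) q
  have hB0 : (0:ℝ) ≤ (τ ^ 2 + b ^ 2) ^ q := rpow_nonneg (by positivity) q
  rcases le_or_gt 2 p with hp2 | hp2
  · -- p ≥ 2, algebraic
    have hq0 : 0 ≤ q := by simp only [hqdef]; linarith
    have h8 : (0:ℝ) < (8:ℝ) ^ q := rpow_pos_of_pos (by norm_num) q
    have h2 : (0:ℝ) < (2:ℝ) ^ q := rpow_pos_of_pos (by norm_num) q
    have hcle : min (p - 1) ((8 : ℝ) ^ (-q) / 2) ≤ (8:ℝ)^(-q) / 2 := min_le_right _ _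
    have h8inv : (8:ℝ) ^ (-q) = ((8:ℝ)^q)⁻¹ := by rw [rpow_neg (by norm_num)]
    have h8pos : (0:ℝ) < (8:ℝ)^(-q) := by rw [h8inv]; positivity
    have h82 : (8:ℝ) ^ (-q) ≤ (2:ℝ)^(-q) := by
      rw [h8inv, rpow_neg (by norm_num)]
      exact inv_anti₀ h2 (rpow_le_rpow (by norm_num) (by norm_num) hq0)
    have hBA : (τ ^ 2 + b ^ 2) ^ q ≤ (τ ^ 2 + a ^ 2) ^ q :=
      rpow_le_rpow (by positivity) (by nlinarith) hq0
    rcases le_or_gt a (2 * b) with hab2 | hab2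
    · -- a ≤ 2b : use B ≥ 8^{-q} M
      have hMB : (τ ^ 2 + a ^ 2 + b ^ 2) ^ q ≤ (8:ℝ)^q * (τ ^ 2 + b ^ 2) ^ q := by
        rw [← mul_rpow (by norm_num) (by positivity)]
        exact rpow_le_rpow (by positivity) (by nlinarith) hq0
      have h1 : (τ ^ 2 + b ^ 2) ^ q * (a - b) ≤
          (τ ^ 2 + a ^ 2) ^ q * a - (τ ^ 2 + b ^ 2) ^ q * b := by
        have := mul_le_mul_of_nonneg_right hBA ha
        linarith
      have h2' : (8:ℝ)^(-q) * ((τ ^ 2 + a ^ 2 + b ^ 2) ^ q * (a - b)) ≤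
          (τ ^ 2 + b ^ 2) ^ q * (a - b) := by
        rw [h8inv, inv_mul_le_iff₀ h8]
        have := mul_le_mul_of_nonneg_right hMB (sub_nonneg.2 hba)
        linarith
      have hc := mul_le_mul_of_nonneg_right hcle hMab
      have h3 : (0:ℝ) ≤ (8:ℝ)^(-q) * ((τ ^ 2 + a ^ 2 + b ^ 2) ^ q * (a - b)) :=
        mul_nonneg h8pos.le hMab
      linarith
    · -- 2b < a
      have hMA : (τ ^ 2 + a ^ 2 + b ^ 2) ^ q ≤ (2:ℝ)^q * (τ ^ 2 + a ^ 2) ^ q := by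
        rw [← mul_rpow (by norm_num) (by positivity)]
        exact rpow_le_rpow (by positivity) (by nlinarith) hq0
      have hBb : (τ ^ 2 + b ^ 2) ^ q * b ≤ (τ ^ 2 + a ^ 2) ^ q * (a/2) := by
        have h1 : (τ ^ 2 + b ^ 2) ^ q * b ≤ (τ ^ 2 + a ^ 2) ^ q * b :=
          mul_le_mul_of_nonneg_right hBA hb
        have h2 := mul_le_mul_of_nonneg_left (show b ≤ a/2 by linarith) hA0
        linarith
      have h2' : (2:ℝ)^(-q) * ((τ ^ 2 + a ^ 2 + b ^ 2) ^ q * (a - b)) ≤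
          (τ ^ 2 + a ^ 2) ^ q * (a - b) := by
        rw [rpow_neg (by norm_num), inv_mul_le_iff₀ h2]
        have := mul_le_mul_of_nonneg_right hMA (sub_nonneg.2 hba)
        linarith
      have hc2 : min (p - 1) ((8 : ℝ) ^ (-q) / 2) ≤ (2:ℝ)^(-q) / 2 :=
        hcle.trans (by linarith)
      have hc := mul_le_mul_of_nonneg_right hc2 hMab
      have h3 : (0:ℝ) ≤ (2:ℝ)^(-q) * ((τ ^ 2 + a ^ 2 + b ^ 2) ^ q * (a - b)) := by
        apply mul_nonneg _ hMab
        rw [rpow_neg (by norm_num)]; positivity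
      have h4 : (0:ℝ) ≤ (τ ^ 2 + a ^ 2) ^ q * b := mul_nonneg hA0 hb
      linarith
  · -- 1 < p < 2
    have hq0 : q ≤ 0 := by simp only [hqdef]; linarith
    have hcle : min (p - 1) ((8 : ℝ) ^ (-q) / 2) ≤ p - 1 := min_le_left _ _
    rcases eq_or_lt_of_le hb with hb0 | hb0
    · -- b = 0
      rw [← hb0]
      have he : (τ ^ 2 + a ^ 2 + 0 ^ 2) = τ ^ 2 + a ^ 2 := by ring
      rw [he, mul_zero, sub_zero, sub_zero]
      have hc := mul_le_mul_of_nonneg_right hcle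
        (mul_nonneg hA0 ha)
      have : (p-1) * ((τ ^ 2 + a ^ 2) ^ q * a) ≤ 1 * ((τ ^ 2 + a ^ 2) ^ q * a) := by
        apply mul_le_mul_of_nonneg_right (by linarith) (mul_nonneg hA0 ha)
      linarith
    · -- 0 < b; mean value argument on [b, a]
      set f : ℝ → ℝ := fun t => (τ ^ 2 + t ^ 2) ^ q * t with hf
      have hderiv : ∀ t ∈ interior (Icc b a), HasDerivAt f
          ((2 * t * q * (τ ^ 2 + t ^ 2) ^ (q - 1)) * t + (τ ^ 2 + t ^ 2) ^ q) t := by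
        intro t ht
        rw [interior_Icc] at ht
        have ht0 : 0 < t := hb0.trans ht.1
        have hu : (0:ℝ) < τ ^ 2 + t ^ 2 := by positivity
        have h1 : HasDerivAt (fun s : ℝ => τ ^ 2 + s ^ 2) (2 * t) t := by
          simpa using (hasDerivAt_pow 2 t).const_add (τ ^ 2)
        have h2 := (h1.rpow_const (p := q) (Or.inl hu.ne')).mul (hasDerivAt_id t)
        exact h2.congr_deriv (by simp only [id]; ring)
      have hderiv_ge : ∀ t ∈ interior (Icc b a),
          (p - 1) * (τ ^ 2 + a ^ 2 + b ^ 2) ^ q ≤ deriv f t := by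
        intro t ht
        rw [(hderiv t ht).deriv]
        rw [interior_Icc] at ht
        have ht0 : 0 < t := hb0.trans ht.1
        have hu : (0:ℝ) < τ ^ 2 + t ^ 2 := by positivity
        have hrw : (τ ^ 2 + t ^ 2) ^ q = (τ ^ 2 + t ^ 2) ^ (q - 1) * (τ ^ 2 + t ^ 2) := by
          rw [← rpow_add_one hu.ne' (q - 1)]; ring_nf
        have hup : (0:ℝ) < (τ ^ 2 + t ^ 2) ^ (q - 1) := rpow_pos_of_pos hu _
        have hMu : (τ ^ 2 + a ^ 2 + b ^ 2) ^ q ≤ (τ ^ 2 + t ^ 2) ^ q :=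
          rpow_le_rpow_of_nonpos hu (by nlinarith [ht.2, ht0.le]) hq0
        have key : (2 * t * q * (τ ^ 2 + t ^ 2) ^ (q - 1)) * t + (τ ^ 2 + t ^ 2) ^ q
            = (τ ^ 2 + t ^ 2) ^ (q - 1) * (τ ^ 2 + (p - 1) * t ^ 2) := by
          rw [hrw, hqdef]; ring
        rw [key]
        have h3 : (p - 1) * (τ ^ 2 + t ^ 2) ≤ τ ^ 2 + (p - 1) * t ^ 2 := by nlinarith
        calc (p - 1) * (τ ^ 2 + a ^ 2 + b ^ 2) ^ q ≤ (p - 1) * (τ ^ 2 + t ^ 2) ^ q := by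
              have := mul_le_mul_of_nonneg_left hMu (show (0:ℝ) ≤ p - 1 by linarith)
              linarith
          _ = (τ ^ 2 + t ^ 2) ^ (q - 1) * ((p - 1) * (τ ^ 2 + t ^ 2)) := by rw [hrw]; ring
          _ ≤ _ := by
              have := mul_le_mul_of_nonneg_left h3 hup.le
              linarith
      have hcont : ContinuousOn f (Icc b a) := by
        apply ContinuousOn.mul _ continuousOn_id
        apply ContinuousOn.rpow_const (by fun_prop)
        intro t ht
        have : 0 < t := lt_of_lt_of_le hb0 ht.1
        left; positivity
      have hdiff : DifferentiableOn ℝ f (interior (Icc b a)) :=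
        fun t ht => ((hderiv t ht).differentiableAt).differentiableWithinAt
      have hmv := (convex_Icc b a).mul_sub_le_image_sub_of_le_deriv hcont hdiff hderiv_ge
        b (left_mem_Icc.2 hba) a (right_mem_Icc.2 hba) hba
      simp only [hf] at hmv
      have hc := mul_le_mul_of_nonneg_right hcle hMab
      linarith
/-- The scalar key lemma, endpoint `s = -ab`. -/
lemma key2 {p : ℝ} (hp : 1 < p) {τ a b : ℝ} (hτ : 0 ≤ τ) (hb : 0 ≤ b) (hba : b ≤ a) :
    min (p - 1) ((8 : ℝ) ^ (-((p - 2) / 2)) / 2) *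
        ((τ ^ 2 + a ^ 2 + b ^ 2) ^ ((p - 2) / 2) * (a + b))
      ≤ (τ ^ 2 + a ^ 2) ^ ((p - 2) / 2) * a + (τ ^ 2 + b ^ 2) ^ ((p - 2) / 2) * b := by
  set q : ℝ := (p - 2) / 2 with hqdef
  have ha : 0 ≤ a := hb.trans hba
  have hM0 : (0:ℝ) ≤ (τ ^ 2 + a ^ 2 + b ^ 2) ^ q := rpow_nonneg (by positivity) q
  have hMab : 0 ≤ (τ ^ 2 + a ^ 2 + b ^ 2) ^ q * (a + b) := mul_nonneg hM0 (by linarith)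
  have hA0 : (0:ℝ) ≤ (τ ^ 2 + a ^ 2) ^ q := rpow_nonneg (by positivity) q
  have hB0 : (0:ℝ) ≤ (τ ^ 2 + b ^ 2) ^ q := rpow_nonneg (by positivity) q
  have hBb : (0:ℝ) ≤ (τ ^ 2 + b ^ 2) ^ q * b := mul_nonneg hB0 hb
  rcases le_or_gt 2 p with hp2 | hp2
  · -- p ≥ 2
    have hq0 : 0 ≤ q := by simp only [hqdef]; linarith
    have h2 : (0:ℝ) < (2:ℝ) ^ q := rpow_pos_of_pos (by norm_num) q
    have h8 : (0:ℝ) < (8:ℝ) ^ q := rpow_pos_of_pos (by norm_num) q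
    have hcle : min (p - 1) ((8 : ℝ) ^ (-q) / 2) ≤ (8:ℝ)^(-q) / 2 := min_le_right _ _
    have h82 : (8:ℝ) ^ (-q) ≤ (2:ℝ)^(-q) := by
      rw [rpow_neg (by norm_num), rpow_neg (by norm_num : (0:ℝ) ≤ 2)]
      exact inv_anti₀ h2 (rpow_le_rpow (by norm_num) (by norm_num) hq0)
    have hc2 : min (p - 1) ((8 : ℝ) ^ (-q) / 2) ≤ (2:ℝ)^(-q) / 2 := hcle.trans (by linarith)
    have hMA : (τ ^ 2 + a ^ 2 + b ^ 2) ^ q ≤ (2:ℝ)^q * (τ ^ 2 + a ^ 2) ^ q := by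
      rw [← mul_rpow (by norm_num) (by positivity)]
      exact rpow_le_rpow (by positivity) (by nlinarith) hq0
    have h2' : (2:ℝ)^(-q) * ((τ ^ 2 + a ^ 2 + b ^ 2) ^ q * (a + b)) ≤
        (τ ^ 2 + a ^ 2) ^ q * (a + b) := by
      rw [rpow_neg (by norm_num), inv_mul_le_iff₀ h2]
      have := mul_le_mul_of_nonneg_right hMA (show (0:ℝ) ≤ a + b by linarith)
      linarith
    have hc := mul_le_mul_of_nonneg_right hc2 hMab
    have h3 : (0:ℝ) ≤ (2:ℝ)^(-q) * ((τ ^ 2 + a ^ 2 + b ^ 2) ^ q * (a + b)) := by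
      apply mul_nonneg _ hMab
      rw [rpow_neg (by norm_num)]; positivity
    have h5 : (τ ^ 2 + a ^ 2) ^ q * b ≤ (τ ^ 2 + a ^ 2) ^ q * a := mul_le_mul_of_nonneg_left hba hA0
    linarith
  · -- p < 2 : M ≤ A and M ≤ B (when positive)
    have hq0 : q ≤ 0 := by simp only [hqdef]; linarith
    have hcle : min (p - 1) ((8 : ℝ) ^ (-q) / 2) ≤ p - 1 := min_le_left _ _
    have hMa : (τ ^ 2 + a ^ 2 + b ^ 2) ^ q * a ≤ (τ ^ 2 + a ^ 2) ^ q * a := by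
      rcases eq_or_lt_of_le ha with h0 | h0
      · rw [← h0, mul_zero, mul_zero]
      · exact mul_le_mul_of_nonneg_right
          (rpow_le_rpow_of_nonpos (by positivity) (by nlinarith) hq0) ha
    have hMb : (τ ^ 2 + a ^ 2 + b ^ 2) ^ q * b ≤ (τ ^ 2 + b ^ 2) ^ q * b := by
      rcases eq_or_lt_of_le hb with h0 | h0
      · rw [← h0, mul_zero, mul_zero]
      · exact mul_le_mul_of_nonneg_right
          (rpow_le_rpow_of_nonpos (by positivity) (by nlinarith) hq0) hb
    have hc := mul_le_mul_of_nonneg_right (hcle.trans (by linarith : p - 1 ≤ 1)) hMab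
    linarith



/-- Strong monotonicity inequality: there is `C = C(p) > 0` with
`(τ²+|x|²+|y|²)^{(p-2)/2}|x−y|² ≤ C (Dφ_{p,τ}(x) − Dφ_{p,τ}(y))·(x−y)`
for all `x, y ∈ ℝⁿ` and `τ ≥ 0`. -/
theorem stmt_5 (n : ℕ) (p : ℝ) (hp : 1 < p) :
    ∃ C > 0, ∀ τ : ℝ, 0 ≤ τ → ∀ x y : EuclideanSpace ℝ (Fin n),
      (τ ^ 2 + ‖x‖ ^ 2 + ‖y‖ ^ 2) ^ ((p - 2) / 2) * ‖x - y‖ ^ 2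
        ≤ C * (inner ℝ (((τ ^ 2 + ‖x‖ ^ 2) ^ ((p - 2) / 2)) • x
                - ((τ ^ 2 + ‖y‖ ^ 2) ^ ((p - 2) / 2)) • y) (x - y) : ℝ) := by
  set c : ℝ := min (p - 1) ((8 : ℝ) ^ (-((p - 2) / 2)) / 2) with hcdef
  have hcpos : 0 < c := by
    apply lt_min (by linarith)
    have : (0:ℝ) < (8:ℝ) ^ (-((p - 2) / 2)) := rpow_pos_of_pos (by norm_num) _
    linarith
  refine ⟨c⁻¹, inv_pos.2 hcpos, ?_⟩
  have key : ∀ τ : ℝ, 0 ≤ τ → ∀ x y : EuclideanSpace ℝ (Fin n), ‖y‖ ≤ ‖x‖ →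
      (τ ^ 2 + ‖x‖ ^ 2 + ‖y‖ ^ 2) ^ ((p - 2) / 2) * ‖x - y‖ ^ 2
        ≤ c⁻¹ * (inner ℝ (((τ ^ 2 + ‖x‖ ^ 2) ^ ((p - 2) / 2)) • x
                - ((τ ^ 2 + ‖y‖ ^ 2) ^ ((p - 2) / 2)) • y) (x - y) : ℝ) := by
    intro τ hτ x y hba
    have hb : (0:ℝ) ≤ ‖y‖ := norm_nonneg y
    have ha : (0:ℝ) ≤ ‖x‖ := norm_nonneg x
    have P := key1 hp hτ hb hba
    have Q := key2 hp hτ hb hba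
    set a := ‖x‖ with hadef
    set b := ‖y‖ with hbdef
    set A := (τ ^ 2 + a ^ 2) ^ ((p - 2) / 2) with hA
    set B := (τ ^ 2 + b ^ 2) ^ ((p - 2) / 2) with hB
    set M := (τ ^ 2 + a ^ 2 + b ^ 2) ^ ((p - 2) / 2) with hM
    set s : ℝ := (inner ℝ x y : ℝ) with hs
    have hs1 : s ≤ a * b := real_inner_le_norm x y
    have habs := abs_real_inner_le_norm x y
    have hs2 : -(a * b) ≤ s := by
      have := neg_abs_le (s : ℝ); rw [hs]; rw [hs] at this
      simp only [← hadef, ← hbdef] at habs ⊢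
      linarith [habs, this]
    have hinner : (inner ℝ (A • x - B • y) (x - y) : ℝ)
        = A * a^2 - A*s - B*s + B*b^2 := by
      simp only [inner_sub_left, inner_sub_right, real_inner_smul_left,
        real_inner_self_eq_norm_sq, ← hadef, ← hbdef]
      rw [real_inner_comm x y, ← hs]
      ring
    have hnorm : ‖x - y‖^2 = a^2 - 2*s + b^2 := by
      rw [norm_sub_sq_real, ← hs]; try ring
    rw [hinner, hnorm]
    have hM0 : (0:ℝ) ≤ M := rpow_nonneg (by positivity) _
    have target : c * (M * (a^2 - 2*s + b^2)) ≤ A * a^2 - A*s - B*s + B*b^2 := by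
      rcases le_or_gt (2*c*M) (A + B) with hcase | hcase
      · have h1 : 0 ≤ (a*b - s) * (A + B - 2*c*M) :=
          mul_nonneg (by linarith) (by linarith)
        have h2 : 0 ≤ (a - b) * (A*a - B*b - c * (M * (a - b))) :=
          mul_nonneg (by linarith) (by linarith)
        nlinarith [h1, h2]
      · have h1 : 0 ≤ (a*b + s) * (2*c*M - (A + B)) :=
          mul_nonneg (by linarith) (by linarith)
        have h2 : 0 ≤ (a + b) * (A*a + B*b - c * (M * (a + b))) :=
          mul_nonneg (by linarith) (by linarith)
        nlinarith [h1, h2]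
    calc M * (a^2 - 2*s + b^2) = c⁻¹ * (c * (M * (a^2 - 2*s + b^2))) := by
          field_simp
      _ ≤ c⁻¹ * (A * a^2 - A*s - B*s + B*b^2) :=
          mul_le_mul_of_nonneg_left target (inv_nonneg.2 hcpos.le)
  intro τ hτ x y
  rcases le_total ‖y‖ ‖x‖ with h | h
  · exact key τ hτ x y h
  · have hxy := key τ hτ y x h
    have e1 : ‖y - x‖ = ‖x - y‖ := norm_sub_rev y x
    have e2 : (inner ℝ ((τ ^ 2 + ‖y‖ ^ 2) ^ ((p - 2) / 2) • y
          - (τ ^ 2 + ‖x‖ ^ 2) ^ ((p - 2) / 2) • x) (y - x) : ℝ)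
        = (inner ℝ ((τ ^ 2 + ‖x‖ ^ 2) ^ ((p - 2) / 2) • x
          - (τ ^ 2 + ‖y‖ ^ 2) ^ ((p - 2) / 2) • y) (x - y) : ℝ) := by
      rw [← neg_sub ((τ ^ 2 + ‖x‖ ^ 2) ^ ((p - 2) / 2) • x)
        ((τ ^ 2 + ‖y‖ ^ 2) ^ ((p - 2) / 2) • y), ← neg_sub x y, inner_neg_neg]
    have e3 : τ ^ 2 + ‖y‖ ^ 2 + ‖x‖ ^ 2 = τ ^ 2 + ‖x‖ ^ 2 + ‖y‖ ^ 2 := by ring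
    rw [e1, e2, e3] at hxy
    exact hxy
end

section
/- For all x ∈ ℝⁿ, 1 < p ≤ 2 and τ > 0: |x|^p ≤ 2^{(2-p)/2} (Dφ_{p,τ}(x) · x + τ^{2-p}(τ² + |x|²)^{(p-2)/2} |x|^p). -/
lemma real_rpow_add_le {a b q : ℝ} (ha : 0 ≤ a) (hb : 0 ≤ b) (hq0 : 0 ≤ q)
    (hq1 : q ≤ 1) : (a + b) ^ q ≤ a ^ q + b ^ q := by
  lift a to NNReal using ha
  lift b to NNReal using hb
  have := NNReal.rpow_add_le_add_rpow a b hq0 hq1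
  exact_mod_cast this

/-- For `1 < p ≤ 2` and `τ > 0`:
`|x|^p ≤ 2^{(2-p)/2}(Dφ_{p,τ}(x)·x + τ^{2-p}(τ²+|x|²)^{(p-2)/2}|x|^p)`. -/
theorem stmt_10 (n : ℕ) (p τ : ℝ) (hp1 : 1 < p) (hp2 : p ≤ 2) (hτ : 0 < τ)
    (x : EuclideanSpace ℝ (Fin n)) :
    ‖x‖ ^ p ≤ 2 ^ ((2 - p) / 2) *
      ((inner ℝ (((τ ^ 2 + ‖x‖ ^ 2) ^ ((p - 2) / 2)) • x) x : ℝ)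
        + τ ^ (2 - p) * (τ ^ 2 + ‖x‖ ^ 2) ^ ((p - 2) / 2) * ‖x‖ ^ p) := by
  set r := ‖x‖ with hr
  have hr0 : 0 ≤ r := norm_nonneg x
  have hS : (0:ℝ) < τ ^ 2 + r ^ 2 := by positivity
  have hinner : (inner ℝ (((τ ^ 2 + r ^ 2) ^ ((p - 2) / 2)) • x) x : ℝ)
      = (τ ^ 2 + r ^ 2) ^ ((p - 2) / 2) * r ^ 2 := by
    rw [real_inner_smul_left, real_inner_self_eq_norm_sq]
  rw [hinner]
  set A := (τ ^ 2 + r ^ 2) ^ ((p - 2) / 2) with hA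
  have hA0 : 0 < A := Real.rpow_pos_of_pos hS _
  set B := (τ ^ 2 + r ^ 2) ^ ((2 - p) / 2) with hB
  have hAB : A * B = 1 := by
    rw [hA, hB, ← Real.rpow_add hS, show (p - 2) / 2 + (2 - p) / 2 = 0 by ring,
      Real.rpow_zero]
  -- key: B ≤ τ^(2-p) + r^(2-p)
  have hkey : B ≤ τ ^ (2 - p) + r ^ (2 - p) := by
    have h1 : ((τ ^ 2 : ℝ) + r ^ 2) ^ ((2 - p) / 2)
        ≤ (τ ^ 2) ^ ((2 - p) / 2) + (r ^ 2) ^ ((2 - p) / 2) :=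
      real_rpow_add_le (by positivity) (by positivity) (by linarith) (by linarith)
    have h2 : ((τ:ℝ) ^ 2) ^ ((2 - p) / 2) = τ ^ (2 - p) := by
      rw [← Real.rpow_natCast τ 2, ← Real.rpow_mul hτ.le]
      congr 1; push_cast; ring
    have h3 : ((r:ℝ) ^ 2) ^ ((2 - p) / 2) = r ^ (2 - p) := by
      rw [← Real.rpow_natCast r 2, ← Real.rpow_mul hr0]
      congr 1; push_cast; ring
    rw [hB, ← h2, ← h3]; exact h1
  have hrp : 0 ≤ r ^ p := Real.rpow_nonneg hr0 p
  have step1 : r ^ p ≤ A * r ^ 2 + τ ^ (2 - p) * A * r ^ p := by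
    have h5 : r ^ (2 - p) * r ^ p = r ^ 2 := by
      rw [← Real.rpow_add' hr0 (by norm_num)]
      rw [show (2 - p + p : ℝ) = 2 by ring, Real.rpow_two]
    calc r ^ p = A * B * r ^ p := by rw [hAB, one_mul]
      _ ≤ A * (τ ^ (2 - p) + r ^ (2 - p)) * r ^ p :=
          mul_le_mul_of_nonneg_right (mul_le_mul_of_nonneg_left hkey hA0.le) hrp
      _ = A * (r ^ (2 - p) * r ^ p) + τ ^ (2 - p) * A * r ^ p := by ring
      _ = A * r ^ 2 + τ ^ (2 - p) * A * r ^ p := by rw [h5]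
  have hone : (1:ℝ) ≤ 2 ^ ((2 - p) / 2) := by
    have := Real.rpow_le_rpow_of_exponent_le (by norm_num : (1:ℝ) ≤ 2)
      (show (0:ℝ) ≤ (2 - p) / 2 by linarith)
    simpa using this
  calc r ^ p ≤ A * r ^ 2 + τ ^ (2 - p) * A * r ^ p := step1
    _ ≤ 2 ^ ((2 - p) / 2) * (A * r ^ 2 + τ ^ (2 - p) * A * r ^ p) := by
        nlinarith [Real.rpow_nonneg (le_of_lt hτ) (2 - p), hA0.le, hrp,
          mul_nonneg hA0.le (sq_nonneg r),
          mul_nonneg (mul_nonneg (Real.rpow_nonneg hτ.le (2 - p)) hA0.le) hrp]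
end

section
/- For every 1 < p < ∞ and τ > 0, all third-order partial derivatives of φ_{p,τ} satisfy the uniform bound max_{1≤j,k,l≤n} |∂³φ_{p,τ}/∂x_j∂x_k∂x_l (x)| ≤ C(p) (τ² + |x|²)^{(p-3)/2} for all x ∈ ℝⁿ, where C(p) > 0 depends only on p. -/
open Real Finset

section Aux

variable {E : Type*} [NormedAddCommGroup E] [InnerProductSpace ℝ E] {τ : ℝ}

private lemma gpos (hτ : 0 < τ) (x : E) : 0 < τ ^ 2 + ‖x‖ ^ 2 := by positivity

private lemma contDiff_A (hτ : 0 < τ) (a : ℝ) :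
    ContDiff ℝ (⊤ : ℕ∞) (fun y : E => (τ ^ 2 + ‖y‖ ^ 2) ^ a) := by
  rw [contDiff_iff_contDiffAt]
  intro x
  exact ((contDiff_const.add (contDiff_norm_sq ℝ)).contDiffAt).rpow_const_of_ne
    (gpos hτ x).ne'

private lemma hasFDerivAt_A (hτ : 0 < τ) (a : ℝ) (x : E) :
    HasFDerivAt (fun y : E => (τ ^ 2 + ‖y‖ ^ 2) ^ a)
      ((2 * a * (τ ^ 2 + ‖x‖ ^ 2) ^ (a - 1)) • innerSL ℝ x) x := by
  have h1 : HasFDerivAt (fun y : E => τ ^ 2 + ‖y‖ ^ 2) (2 • innerSL ℝ x) x :=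
    (hasStrictFDerivAt_norm_sq x).hasFDerivAt.const_add (τ ^ 2)
  have h2 := h1.rpow_const (p := a) (Or.inl (gpos hτ x).ne')
  convert h2 using 1
  ext y
  simp [smul_smul]
  ring

private lemma fderiv_A (hτ : 0 < τ) (a : ℝ) :
    fderiv ℝ (fun y : E => (τ ^ 2 + ‖y‖ ^ 2) ^ a) =
      fun x => (2 * a * (τ ^ 2 + ‖x‖ ^ 2) ^ (a - 1)) • innerSL ℝ x :=
  funext fun x => (hasFDerivAt_A hτ a x).fderiv

private lemma L_bound (hτ : 0 < τ) (x : E) (j : ℕ) :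
    ‖iteratedFDeriv ℝ j (fun y : E => innerSL ℝ y) x‖ ≤
      (τ ^ 2 + ‖x‖ ^ 2) ^ ((1 - (j : ℝ)) / 2) := by
  have hs := gpos hτ x
  match j with
  | 0 =>
    rw [norm_iteratedFDeriv_zero, innerSL_apply_norm]
    have h1 : ‖x‖ ≤ Real.sqrt (τ ^ 2 + ‖x‖ ^ 2) :=
      calc ‖x‖ = Real.sqrt (‖x‖ ^ 2) := (Real.sqrt_sq (norm_nonneg x)).symm
        _ ≤ Real.sqrt (τ ^ 2 + ‖x‖ ^ 2) := Real.sqrt_le_sqrt (by nlinarith [sq_nonneg τ])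
    calc ‖x‖ ≤ Real.sqrt (τ ^ 2 + ‖x‖ ^ 2) := h1
      _ = (τ ^ 2 + ‖x‖ ^ 2) ^ ((1 - ((0 : ℕ) : ℝ)) / 2) := by
          rw [Real.sqrt_eq_rpow]; norm_num
  | 1 =>
    rw [← norm_iteratedFDeriv_fderiv, norm_iteratedFDeriv_zero]
    have e1 : fderiv ℝ (fun y : E => innerSL ℝ y) x = innerSL ℝ :=
      (innerSL ℝ (E := E)).fderiv
    rw [e1]
    calc ‖innerSL ℝ (E := E)‖ ≤ 1 := norm_innerSL_le ℝ
      _ = (τ ^ 2 + ‖x‖ ^ 2) ^ ((1 - ((1 : ℕ) : ℝ)) / 2) := by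
          norm_num
  | (j + 2) =>
    rw [← norm_iteratedFDeriv_fderiv]
    have e1 : fderiv ℝ (fun y : E => innerSL ℝ y) = fun _ : E => innerSL ℝ (E := E) :=
      funext fun y => (innerSL ℝ (E := E)).fderiv
    rw [e1, iteratedFDeriv_const_of_ne (Nat.succ_ne_zero j)]
    simp only [Pi.zero_apply, norm_zero]
    positivity

set_option synthInstance.maxHeartbeats 1000000 in
set_option maxHeartbeats 2000000 in
private lemma A_rec (hτ : 0 < τ) :
    ∀ (m : ℕ) (a : ℝ), ∃ C > 0, ∀ (x : E) (i : ℕ), i ≤ m →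
      ‖iteratedFDeriv ℝ i (fun y : E => (τ ^ 2 + ‖y‖ ^ 2) ^ a) x‖ ≤
        C * (τ ^ 2 + ‖x‖ ^ 2) ^ (a - (i : ℝ) / 2) := by
  intro m
  induction m with
  | zero =>
    intro a
    refine ⟨1, one_pos, fun x i hi => ?_⟩
    interval_cases i
    have hs := gpos hτ x
    rw [norm_iteratedFDeriv_zero, Real.norm_eq_abs,
      abs_of_pos (Real.rpow_pos_of_pos hs a)]
    have he : a - ((0 : ℕ) : ℝ) / 2 = a := by norm_num
    rw [he, one_mul]
  | succ m IH =>
    intro a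
    obtain ⟨C₀, hC₀, h₀⟩ := IH a
    obtain ⟨C₁, hC₁, h₁⟩ := IH (a - 1)
    refine ⟨C₀ + 2 ^ m * ((2 * |a| + 1) * C₁), by positivity, fun x i hi => ?_⟩
    have hs := gpos hτ x
    by_cases h : i ≤ m
    · exact (h₀ x i h).trans (mul_le_mul_of_nonneg_right
        (le_add_of_nonneg_right (by positivity)) (Real.rpow_nonneg hs.le _))
    have hi' : i = m + 1 := by omega
    subst hi'
    rw [← norm_iteratedFDeriv_fderiv, fderiv_A hτ a]
    have hf : ContDiff ℝ ((⊤ : ℕ∞) : WithTop ℕ∞)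
        (fun y : E => 2 * a * (τ ^ 2 + ‖y‖ ^ 2) ^ (a - 1)) :=
      contDiff_const.mul (contDiff_A hτ (a - 1))
    have hg : ContDiff ℝ ((⊤ : ℕ∞) : WithTop ℕ∞) (fun y : E => innerSL ℝ y) :=
      (innerSL ℝ (E := E)).contDiff
    have hn : (m : WithTop ℕ∞) ≤ ((⊤ : ℕ∞) : WithTop ℕ∞) := by
      exact_mod_cast le_top
    refine (norm_iteratedFDeriv_smul_le hf hg x hn).trans ?_
    have key : ∀ i ∈ Finset.range (m + 1),
        (m.choose i : ℝ) *
            ‖iteratedFDeriv ℝ i (fun y : E => 2 * a * (τ ^ 2 + ‖y‖ ^ 2) ^ (a - 1)) x‖ *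
            ‖iteratedFDeriv ℝ (m - i) (fun y : E => innerSL ℝ y) x‖ ≤
          (m.choose i : ℝ) *
            ((2 * |a| + 1) * C₁ * (τ ^ 2 + ‖x‖ ^ 2) ^ (a - ((m : ℝ) + 1) / 2)) := by
      intro i hi
      rw [Finset.mem_range] at hi
      have hile : i ≤ m := Nat.lt_succ_iff.mp hi
      have e2 : (fun y : E => 2 * a * (τ ^ 2 + ‖y‖ ^ 2) ^ (a - 1)) =
          (2 * a) • (fun y : E => (τ ^ 2 + ‖y‖ ^ 2) ^ (a - 1)) := rfl
      have hA : ‖iteratedFDeriv ℝ i (fun y : E => 2 * a * (τ ^ 2 + ‖y‖ ^ 2) ^ (a - 1)) x‖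
          ≤ (2 * |a| + 1) * C₁ * (τ ^ 2 + ‖x‖ ^ 2) ^ (a - 1 - (i : ℝ) / 2) := by
        rw [e2, iteratedFDeriv_const_smul_apply
          ((contDiff_A hτ (a - 1)).contDiffAt.of_le (by exact_mod_cast le_top)),
          norm_smul (2 * a) (iteratedFDeriv ℝ i (fun y : E => (τ ^ 2 + ‖y‖ ^ 2) ^ (a - 1)) x)]
        have h2a : ‖(2 * a : ℝ)‖ ≤ 2 * |a| + 1 := by
          rw [Real.norm_eq_abs, abs_mul, abs_two]
          linarith
        calc ‖(2 * a : ℝ)‖ * ‖iteratedFDeriv ℝ i (fun y : E => (τ ^ 2 + ‖y‖ ^ 2) ^ (a - 1)) x‖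
            ≤ (2 * |a| + 1) * (C₁ * (τ ^ 2 + ‖x‖ ^ 2) ^ (a - 1 - (i : ℝ) / 2)) := by
              apply mul_le_mul h2a (h₁ x i hile) (norm_nonneg _) (by positivity)
          _ = (2 * |a| + 1) * C₁ * (τ ^ 2 + ‖x‖ ^ 2) ^ (a - 1 - (i : ℝ) / 2) := by ring
      have hL := L_bound hτ x (m - i)
      have hmix : (τ ^ 2 + ‖x‖ ^ 2) ^ (a - 1 - (i : ℝ) / 2) *
          (τ ^ 2 + ‖x‖ ^ 2) ^ ((1 - ((m - i : ℕ) : ℝ)) / 2) =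
          (τ ^ 2 + ‖x‖ ^ 2) ^ (a - ((m : ℝ) + 1) / 2) := by
        rw [← Real.rpow_add hs]
        congr 1
        have : ((m - i : ℕ) : ℝ) = (m : ℝ) - (i : ℝ) := by
          push_cast [Nat.cast_sub hile]
          ring
        rw [this]; ring
      calc (m.choose i : ℝ) *
            ‖iteratedFDeriv ℝ i (fun y : E => 2 * a * (τ ^ 2 + ‖y‖ ^ 2) ^ (a - 1)) x‖ *
            ‖iteratedFDeriv ℝ (m - i) (fun y : E => innerSL ℝ y) x‖
          ≤ (m.choose i : ℝ) *
            ((2 * |a| + 1) * C₁ * (τ ^ 2 + ‖x‖ ^ 2) ^ (a - 1 - (i : ℝ) / 2)) *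
            ((τ ^ 2 + ‖x‖ ^ 2) ^ ((1 - ((m - i : ℕ) : ℝ)) / 2)) := by
            apply mul_le_mul (mul_le_mul_of_nonneg_left hA (by positivity)) hL
              (norm_nonneg _) (by positivity)
        _ = (m.choose i : ℝ) *
            ((2 * |a| + 1) * C₁ * (τ ^ 2 + ‖x‖ ^ 2) ^ (a - ((m : ℝ) + 1) / 2)) := by
            rw [mul_assoc ((m.choose i : ℝ)), mul_assoc ((2 * |a| + 1) * C₁), hmix]
    calc (∑ i ∈ Finset.range (m + 1), (m.choose i : ℝ) *
            ‖iteratedFDeriv ℝ i (fun y : E => 2 * a * (τ ^ 2 + ‖y‖ ^ 2) ^ (a - 1)) x‖ *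
            ‖iteratedFDeriv ℝ (m - i) (fun y : E => innerSL ℝ y) x‖)
        ≤ ∑ i ∈ Finset.range (m + 1), (m.choose i : ℝ) *
            ((2 * |a| + 1) * C₁ * (τ ^ 2 + ‖x‖ ^ 2) ^ (a - ((m : ℝ) + 1) / 2)) :=
          Finset.sum_le_sum key
      _ = (2 : ℝ) ^ m * ((2 * |a| + 1) * C₁ * (τ ^ 2 + ‖x‖ ^ 2) ^ (a - ((m : ℝ) + 1) / 2)) := by
          rw [← Finset.sum_mul]
          congr 1
          rw [← Nat.cast_sum]
          rw [Nat.sum_range_choose]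
          push_cast
          ring
      _ ≤ (C₀ + 2 ^ m * ((2 * |a| + 1) * C₁)) *
            (τ ^ 2 + ‖x‖ ^ 2) ^ (a - ((m + 1 : ℕ) : ℝ) / 2) := by
          have : a - ((m : ℝ) + 1) / 2 = a - ((m + 1 : ℕ) : ℝ) / 2 := by push_cast; ring
          rw [this]
          rw [← mul_assoc]
          apply mul_le_mul_of_nonneg_right _ (Real.rpow_nonneg hs.le _)
          nlinarith [hC₀.le]

end Aux

/-- For `τ > 0`, all third-order partial derivatives of
`φ_{p,τ}(x) = (1/p)(τ²+|x|²)^{p/2}` satisfy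
`|∂³φ_{p,τ}/∂x_j∂x_k∂x_l (x)| ≤ C(p) (τ²+|x|²)^{(p-3)/2}`. -/
theorem stmt_11 (n : ℕ) (p τ : ℝ) (hp : 1 < p) (hτ : 0 < τ) :
    ∃ C > 0, ∀ x : EuclideanSpace ℝ (Fin n), ∀ j k l : Fin n,
      |iteratedFDeriv ℝ 3
          (fun y : EuclideanSpace ℝ (Fin n) => (1 / p) * (τ ^ 2 + ‖y‖ ^ 2) ^ (p / 2)) x
          ![EuclideanSpace.single j (1 : ℝ), EuclideanSpace.single k (1 : ℝ),
            EuclideanSpace.single l (1 : ℝ)]|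
        ≤ C * (τ ^ 2 + ‖x‖ ^ 2) ^ ((p - 3) / 2) := by
  obtain ⟨C, hC, hbound⟩ := A_rec (E := EuclideanSpace ℝ (Fin n)) hτ 3 (p / 2)
  refine ⟨C, hC, fun x j k l => ?_⟩
  have hs := gpos hτ x
  have hp0 : (0 : ℝ) < p := lt_trans one_pos hp
  have efun : (fun y : EuclideanSpace ℝ (Fin n) => (1 / p) * (τ ^ 2 + ‖y‖ ^ 2) ^ (p / 2)) =
      (1 / p) • (fun y : EuclideanSpace ℝ (Fin n) => (τ ^ 2 + ‖y‖ ^ 2) ^ (p / 2)) := rfl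
  rw [efun, ← Real.norm_eq_abs, iteratedFDeriv_const_smul_apply
    ((contDiff_A hτ (p / 2)).contDiffAt.of_le (by norm_cast))]
  rw [ContinuousMultilinearMap.smul_apply, norm_smul]
  have h1p : ‖(1 / p : ℝ)‖ ≤ 1 := by
    rw [Real.norm_eq_abs, abs_of_pos (by positivity)]
    rw [div_le_one hp0]
    linarith
  have hprod : (∏ i, ‖![EuclideanSpace.single j (1 : ℝ), EuclideanSpace.single k (1 : ℝ),
      EuclideanSpace.single l (1 : ℝ)] i‖) = 1 := by
    rw [Fin.prod_univ_three]
    simp [EuclideanSpace.norm_single]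
  have hop := (iteratedFDeriv ℝ 3
      (fun y : EuclideanSpace ℝ (Fin n) => (τ ^ 2 + ‖y‖ ^ 2) ^ (p / 2)) x).le_opNorm
      ![EuclideanSpace.single j (1 : ℝ), EuclideanSpace.single k (1 : ℝ),
        EuclideanSpace.single l (1 : ℝ)]
  rw [hprod, mul_one] at hop
  have hb := hbound x 3 le_rfl
  have hexp : p / 2 - ((3 : ℕ) : ℝ) / 2 = (p - 3) / 2 := by push_cast; ring
  rw [hexp] at hb
  calc ‖(1 / p : ℝ)‖ * ‖iteratedFDeriv ℝ 3
        (fun y : EuclideanSpace ℝ (Fin n) => (τ ^ 2 + ‖y‖ ^ 2) ^ (p / 2)) x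
        ![EuclideanSpace.single j (1 : ℝ), EuclideanSpace.single k (1 : ℝ),
          EuclideanSpace.single l (1 : ℝ)]‖
      ≤ 1 * (C * (τ ^ 2 + ‖x‖ ^ 2) ^ ((p - 3) / 2)) := by
        apply mul_le_mul h1p (hop.trans hb) (norm_nonneg _) one_pos.le
    _ = C * (τ ^ 2 + ‖x‖ ^ 2) ^ ((p - 3) / 2) := one_mul _
end

section
/- For 1 < p < 2, τ = 0 and x ≠ 0 ≠ y in ℝⁿ, the monotonicity inequality (|x|^{p-2}x − |y|^{p-2}y) · (x − y) ≥ c(p) (|x|² + |y|²)^{(p-2)/2} |x − y|² holds for some constant c(p) > 0 depending only on p. -/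
open Real

/-- Concavity/Bernoulli: for `0 < b ≤ a`, `(p-1) a^{p-2}(a-b) ≤ a^{p-1} - b^{p-1}`. -/
private lemma key_scalar {p a b : ℝ} (hp1 : 1 < p) (hp2 : p < 2)
    (ha : 0 < a) (hb : 0 < b) :
    (p - 1) * (a ^ (p - 2) * (a - b)) ≤ a ^ (p - 1) - b ^ (p - 1) := by
  have hq0 : 0 ≤ p - 1 := by linarith
  have hq1 : p - 1 ≤ 1 := by linarith
  have hs : -1 ≤ b / a - 1 := by
    have := div_nonneg hb.le ha.le; linarith
  have hber := rpow_one_add_le_one_add_mul_self hs hq0 hq1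
  have h1 : (b / a) ^ (p - 1) ≤ 1 + (p - 1) * (b / a - 1) := by
    have : (1 : ℝ) + (b / a - 1) = b / a := by ring
    rwa [this] at hber
  have hA : a ^ (p - 1) = a ^ (p - 2) * a := by
    rw [show p - 1 = (p - 2) + 1 by ring, Real.rpow_add_one ha.ne']
  have h3 : b ^ (p - 1) ≤ a ^ (p - 1) * (1 + (p - 1) * (b / a - 1)) := by
    calc b ^ (p - 1) = a ^ (p - 1) * ((b / a) ^ (p - 1)) := by
          rw [Real.div_rpow hb.le ha.le]
          field_simp
      _ ≤ _ := mul_le_mul_of_nonneg_left h1 (Real.rpow_pos_of_pos ha _).le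
  have expand : a ^ (p - 1) * (1 + (p - 1) * (b / a - 1))
      = a ^ (p - 1) + (p - 1) * (a ^ (p - 2) * (b - a)) := by
    rw [hA]; field_simp
  rw [expand] at h3
  linarith

/-- Scalar version of the monotonicity inequality, assuming `b ≤ a`. -/
private lemma scalar_main {p a b s : ℝ} (hp1 : 1 < p) (hp2 : p < 2)
    (ha : 0 < a) (hb : 0 < b) (hba : b ≤ a) (hs : s ≤ a * b) :
    (p - 1) * (a ^ 2 + b ^ 2) ^ ((p - 2) / 2) * (a ^ 2 + b ^ 2 - 2 * s)
      ≤ a ^ (p - 2) * a ^ 2 + b ^ (p - 2) * b ^ 2 - (a ^ (p - 2) + b ^ (p - 2)) * s := by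
  set A := a ^ (p - 2) with hAdef
  set B := b ^ (p - 2) with hBdef
  set K := (a ^ 2 + b ^ 2) ^ ((p - 2) / 2) with hKdef
  have hexp : (p - 2) / 2 ≤ 0 := by linarith
  have ha2 : (0:ℝ) < a ^ 2 := by positivity
  have hb2 : (0:ℝ) < b ^ 2 := by positivity
  have hsq : ∀ x : ℝ, 0 < x → (x ^ 2) ^ ((p - 2) / 2) = x ^ (p - 2) := by
    intro x hx
    rw [← Real.rpow_natCast x 2, ← Real.rpow_mul hx.le]
    congr 1
    push_cast
    ring
  have hKA : K ≤ A := by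
    rw [hAdef, ← hsq a ha]
    exact Real.rpow_le_rpow_of_nonpos ha2 (by linarith) hexp
  have hKB : K ≤ B := by
    rw [hBdef, ← hsq b hb]
    exact Real.rpow_le_rpow_of_nonpos hb2 (by linarith) hexp
  have hKpos : 0 < K := Real.rpow_pos_of_pos (by positivity) _
  have hApos : 0 < A := Real.rpow_pos_of_pos ha _
  have hc1 : p - 1 ≤ 1 := by linarith
  have hc0 : 0 ≤ p - 1 := by linarith
  -- second bracket: A + B - 2(p-1)K ≥ 0
  have h2 : 2 * ((p - 1) * K) ≤ A + B := by nlinarith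
  -- first bracket
  have hkey := key_scalar hp1 hp2 ha hb
  have hA1 : a ^ (p - 1) = A * a := by
    rw [hAdef, show p - 1 = (p - 2) + 1 by ring, Real.rpow_add_one ha.ne']
  have hB1 : b ^ (p - 1) = B * b := by
    rw [hBdef, show p - 1 = (p - 2) + 1 by ring, Real.rpow_add_one hb.ne']
  rw [hA1, hB1] at hkey
  -- (A*a - B*b)*(a-b) ≥ (p-1)*K*(a-b)^2
  have h1 : (p - 1) * K * (a - b) ^ 2 ≤ (A * a - B * b) * (a - b) := by
    have hab : 0 ≤ a - b := by linarith
    have step1 : (p - 1) * K * (a - b) ^ 2 ≤ (p - 1) * A * (a - b) ^ 2 :=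
      mul_le_mul_of_nonneg_right (mul_le_mul_of_nonneg_left hKA hc0) (sq_nonneg _)
    have step2 : (p - 1) * A * (a - b) ^ 2 ≤ (A * a - B * b) * (a - b) := by nlinarith
    linarith
  have hprod : 0 ≤ (a * b - s) * (A + B - 2 * ((p - 1) * K)) :=
    mul_nonneg (by linarith) (by linarith)
  nlinarith [h1, hprod]

/-- For `1 < p < 2` and nonzero `x, y ∈ ℝⁿ`:
`(|x|^{p-2}x − |y|^{p-2}y)·(x−y) ≥ c(p)(|x|²+|y|²)^{(p-2)/2}|x−y|²`. -/
theorem stmt_13 (n : ℕ) (p : ℝ) (hp1 : 1 < p) (hp2 : p < 2) :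
    ∃ c > 0, ∀ x y : EuclideanSpace ℝ (Fin n), x ≠ 0 → y ≠ 0 →
      (inner ℝ ((‖x‖ ^ (p - 2)) • x - (‖y‖ ^ (p - 2)) • y) (x - y) : ℝ)
        ≥ c * (‖x‖ ^ 2 + ‖y‖ ^ 2) ^ ((p - 2) / 2) * ‖x - y‖ ^ 2 := by
  refine ⟨p - 1, by linarith, ?_⟩
  have main : ∀ x y : EuclideanSpace ℝ (Fin n), x ≠ 0 → y ≠ 0 → ‖y‖ ≤ ‖x‖ →
      (inner ℝ ((‖x‖ ^ (p - 2)) • x - (‖y‖ ^ (p - 2)) • y) (x - y) : ℝ)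
        ≥ (p - 1) * (‖x‖ ^ 2 + ‖y‖ ^ 2) ^ ((p - 2) / 2) * ‖x - y‖ ^ 2 := by
    intro x y hx hy hba
    have ha : 0 < ‖x‖ := norm_pos_iff.mpr hx
    have hb : 0 < ‖y‖ := norm_pos_iff.mpr hy
    have hinner : (inner ℝ ((‖x‖ ^ (p - 2)) • x - (‖y‖ ^ (p - 2)) • y) (x - y) : ℝ)
        = ‖x‖ ^ (p - 2) * ‖x‖ ^ 2 + ‖y‖ ^ (p - 2) * ‖y‖ ^ 2
          - (‖x‖ ^ (p - 2) + ‖y‖ ^ (p - 2)) * (inner ℝ x y : ℝ) := by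
      simp only [inner_sub_left, inner_sub_right, real_inner_smul_left,
        real_inner_self_eq_norm_sq, real_inner_comm y x, RCLike.ofReal_real_eq_id, id_eq,
        conj_trivial]
      ring
    have hnorm : ‖x - y‖ ^ 2 = ‖x‖ ^ 2 + ‖y‖ ^ 2 - 2 * (inner ℝ x y : ℝ) := by
      rw [norm_sub_sq_real]; ring
    rw [hinner, hnorm]
    exact scalar_main hp1 hp2 ha hb hba (real_inner_le_norm x y)
  intro x y hx hy
  rcases le_total ‖y‖ ‖x‖ with h | h
  · exact main x y hx hy h
  · have := main y x hy hx h
    have e1 : ((‖y‖ ^ (p - 2)) • y - (‖x‖ ^ (p - 2)) • x : EuclideanSpace ℝ (Fin n))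
        = -((‖x‖ ^ (p - 2)) • x - (‖y‖ ^ (p - 2)) • y) := by abel
    have e2 : (y - x : EuclideanSpace ℝ (Fin n)) = -(x - y) := by abel
    rw [e1, e2, inner_neg_neg, norm_neg] at this
    calc (p - 1) * (‖x‖ ^ 2 + ‖y‖ ^ 2) ^ ((p - 2) / 2) * ‖x - y‖ ^ 2
        = (p - 1) * (‖y‖ ^ 2 + ‖x‖ ^ 2) ^ ((p - 2) / 2) * ‖x - y‖ ^ 2 := by ring_nf
      _ ≤ _ := this
end
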